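/- Assume the value semigroup Γ = ν(R \ {0}) is symmetric, i.e. c = 2δ. For a standard R-submodule M ⊆ O, the following are equivalent: (1) M is invertible, i.e. M = R·x for a single element x (necessarily with ν(x) = 0, normalizable to x ∈ 1 + zO); (2) Δ_M = Γ; (3) dev(M) = 0; (4) c_M = c. -/

import Mathlib

open PowerSeries

/-- `ν f = n` : the order of the power series `f` equals `n`. -/
def HasOrd {k : Type*} [Semiring k] (f : PowerSeries k) (n : ℕ) : Prop :=
  PowerSeries.coeff n f ≠ 0 ∧ ∀ m < n, PowerSeries.coeff m f = 0

/-- The set of orders of the nonzero elements of `S ⊆ k[[z]]`. -/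
def ValSet {k : Type*} [Semiring k] (S : Set (PowerSeries k)) : Set ℕ :=
  {n | ∃ f ∈ S, HasOrd f n}

namespace InvTFAE
variable {k : Type*} [Field k]

lemma hasOrd_iff {f : PowerSeries k} {n : ℕ} : HasOrd f n ↔ f.order = n :=
  PowerSeries.order_eq_nat.symm

lemma hasOrd_X_pow (n : ℕ) : HasOrd (X ^ n : PowerSeries k) n :=
  hasOrd_iff.2 (PowerSeries.order_X_pow n)


lemma hasOrd_iff2 {f : PowerSeries k} {n : ℕ} : HasOrd f n ↔ f.order = n :=
  PowerSeries.order_eq_nat.symm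

lemma _root_.HasOrd.ne_zero {f : PowerSeries k} {n : ℕ} (h : HasOrd f n) : f ≠ 0 := by
  intro h0; exact h.1 (by simp [h0])

lemma _root_.HasOrd.unique {f : PowerSeries k} {a b : ℕ} (ha : HasOrd f a) (hb : HasOrd f b) :
    a = b := by
  have h := (hasOrd_iff.1 ha).symm.trans (hasOrd_iff.1 hb)
  exact_mod_cast h

lemma exists_hasOrd {f : PowerSeries k} (hf : f ≠ 0) : ∃ n, HasOrd f n := by
  have h := PowerSeries.order_finite_iff_ne_zero.2 hf
  lift f.order to ℕ using h.ne with n hn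
  exact ⟨n, hasOrd_iff.2 hn.symm⟩

lemma _root_.HasOrd.mul {f g : PowerSeries k} {a b : ℕ} (hf : HasOrd f a) (hg : HasOrd g b) :
    HasOrd (f * g) (a + b) := by
  rw [hasOrd_iff] at *
  rw [PowerSeries.order_mul, hf, hg]
  push_cast
  rfl

lemma hasOrd_one : HasOrd (1 : PowerSeries k) 0 :=
  hasOrd_iff.2 (by simp [PowerSeries.order_one])

lemma mem_of_cond {M : Submodule k (PowerSeries k)} {N : ℕ}
    (hN : ∀ f : PowerSeries k, X ^ N * f ∈ M) {g : PowerSeries k}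
    (hg : ∀ i < N, PowerSeries.coeff i g = 0) : g ∈ M := by
  obtain ⟨h, rfl⟩ := PowerSeries.X_pow_dvd_iff.2 hg
  exact hN h

lemma valSet_of_cond {M : Submodule k (PowerSeries k)} {N : ℕ}
    (hN : ∀ f : PowerSeries k, X ^ N * f ∈ M) {n : ℕ} (hn : N ≤ n) :
    n ∈ ValSet (M : Set (PowerSeries k)) := by
  refine ⟨X ^ n, ?_, hasOrd_X_pow n⟩
  have h : (X : PowerSeries k) ^ n = X ^ N * X ^ (n - N) := by
    rw [← pow_add, Nat.add_sub_cancel' hn]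
  rw [h]; exact hN _

lemma dim_lemma :
    ∀ (N : ℕ) (M : Submodule k (PowerSeries k)), (∀ f : PowerSeries k, X ^ N * f ∈ M) →
      Module.Finite k (PowerSeries k ⧸ M) ∧
        Module.finrank k (PowerSeries k ⧸ M)
          = ((ValSet (M : Set (PowerSeries k)))ᶜ).ncard := by
  intro N
  induction N with
  | zero =>
    intro M hM
    have hM' : M = ⊤ := Submodule.eq_top_iff'.2 fun f => by simpa using hM f
    subst hM'
    haveI hs : Subsingleton (PowerSeries k ⧸ (⊤ : Submodule k (PowerSeries k))) :=
      Submodule.Quotient.subsingleton_iff.2 rfl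
    refine ⟨Module.Finite.of_surjective (0 : k →ₗ[k] _) (fun x => ⟨0, Subsingleton.elim _ _⟩), ?_⟩
    rw [Module.finrank_zero_of_subsingleton]
    have : ValSet ((⊤ : Submodule k (PowerSeries k)) : Set (PowerSeries k)) = Set.univ :=
      Set.eq_univ_of_forall fun n => ⟨X ^ n, trivial, hasOrd_X_pow n⟩
    rw [this, Set.compl_univ, Set.ncard_empty]
  | succ N IH =>
    intro M hM
    by_cases hN : ∃ f ∈ M, HasOrd f N
    · obtain ⟨f, hfM, hf⟩ := hN
      have hcond : ∀ g : PowerSeries k, X ^ N * g ∈ M := by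
        intro g
        set h2 := X ^ N * g with hh2
        have hlow : ∀ i < N, PowerSeries.coeff i h2 = 0 := fun i hi =>
          PowerSeries.X_pow_dvd_iff.1 (dvd_mul_right _ _) i hi
        set a := PowerSeries.coeff N h2 * (PowerSeries.coeff N f)⁻¹ with ha
        have h3 : h2 - a • f ∈ M := by
          apply mem_of_cond hM
          intro i hi
          rcases Nat.lt_succ_iff_lt_or_eq.1 hi with hi' | rfl
          · simp [PowerSeries.coeff_smul, hlow i hi', hf.2 i hi']
          · simp only [map_sub, PowerSeries.coeff_smul, smul_eq_mul, ha]
            rw [mul_assoc, inv_mul_cancel₀ hf.1, mul_one, sub_self]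
        have h4 := M.add_mem h3 (M.smul_mem a hfM)
        simpa using h4
      exact IH M hcond
    · push_neg at hN
      have hXN : (X : PowerSeries k) ^ N ∉ M := fun h => hN _ h (hasOrd_X_pow N)
      set M' := M ⊔ Submodule.span k {(X : PowerSeries k) ^ N} with hMdef
      have hle : M ≤ M' := le_sup_left
      have hXmem : (X : PowerSeries k) ^ N ∈ M' :=
        Submodule.mem_sup_right (Submodule.mem_span_singleton_self _)
      have hcond' : ∀ f : PowerSeries k, X ^ N * f ∈ M' := by
        intro f
        obtain ⟨h, hh⟩ := PowerSeries.X_dvd_iff.2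
          (show PowerSeries.constantCoeff (f - PowerSeries.C
            (PowerSeries.constantCoeff f)) = 0 by simp)
        have hfe : f = PowerSeries.C (PowerSeries.constantCoeff f) + X * h := by
          rw [← hh]; ring
        have key : X ^ N * f
            = X ^ (N + 1) * h + (PowerSeries.constantCoeff f) • X ^ N := by
          calc X ^ N * f
              = X ^ N * (PowerSeries.C (PowerSeries.constantCoeff f) + X * h) := by
                rw [← hfe]
            _ = X ^ (N + 1) * h + (PowerSeries.constantCoeff f) • X ^ N := by
                rw [PowerSeries.smul_eq_C_mul]; ring
        rw [key]
        exact M'.add_mem (hle (hM h)) (M'.smul_mem _ hXmem)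
      -- coefficients of elements of M'
      have hcoe : ∀ (g : PowerSeries k) (a : k) (i : ℕ),
          PowerSeries.coeff i (g + a • X ^ N)
            = PowerSeries.coeff i g + (if i = N then a else 0) := by
        intro g a i
        simp [PowerSeries.coeff_smul, PowerSeries.coeff_X_pow, mul_ite]
      have hVS : ValSet (M' : Set (PowerSeries k))
          = insert N (ValSet (M : Set (PowerSeries k))) := by
        ext n
        constructor
        · rintro ⟨f, hfM', hford⟩
          obtain ⟨g, hg, z, hz, rfl⟩ := Submodule.mem_sup.1 hfM'
          obtain ⟨a, rfl⟩ := Submodule.mem_span_singleton.1 hz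
          by_cases ha : a = 0
          · refine Set.mem_insert_iff.2 (Or.inr ⟨g, hg, ?_⟩)
            simpa [ha] using hford
          by_cases hnN : n = N
          · exact hnN ▸ Set.mem_insert _ _
          refine Set.mem_insert_iff.2 (Or.inr ?_)
          rcases lt_trichotomy n N with hlt | heq | hgt
          · refine ⟨g, hg, ⟨?_, ?_⟩⟩
            · have h1 := hford.1; rw [hcoe] at h1
              simpa [show n ≠ N from hnN] using h1
            · intro i hi
              have h2 := hford.2 i hi; rw [hcoe] at h2
              simpa [show i ≠ N by omega] using h2
          · exact absurd heq hnN
          · exfalso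
            apply hN g hg
            constructor
            · have hcN := hford.2 N hgt
              rw [hcoe, if_pos rfl] at hcN
              have : PowerSeries.coeff N g = -a := eq_neg_of_add_eq_zero_left hcN
              rw [this]
              exact neg_ne_zero.2 ha
            · intro i hi
              have h2 := hford.2 i (lt_trans hi hgt)
              rw [hcoe] at h2
              simpa [show i ≠ N by omega] using h2
        · rintro (rfl | ⟨f, hf, hford⟩)
          · exact ⟨X ^ _, hXmem, hasOrd_X_pow _⟩
          · exact ⟨f, hle hf, hford⟩
      have hNmem : N ∈ ValSet (M' : Set (PowerSeries k)) := ⟨X ^ N, hXmem, hasOrd_X_pow N⟩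
      have hninM : N ∉ ValSet (M : Set (PowerSeries k)) := fun ⟨f, hf, hford⟩ => hN f hf hford
      have hfinC' : ((ValSet (M' : Set (PowerSeries k)))ᶜ).Finite := by
        apply (Set.finite_Iio N).subset
        intro n hn
        by_contra hlt
        simp only [Set.mem_Iio, not_lt] at hlt
        exact hn (valSet_of_cond hcond' hlt)
      have h1 : (ValSet (M : Set (PowerSeries k)))ᶜ
          = insert N ((ValSet (M' : Set (PowerSeries k)))ᶜ) := by
        rw [hVS]
        ext n
        simp only [Set.mem_compl_iff, Set.mem_insert_iff]
        by_cases hn : n = N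
        · subst hn; simp [hninM]
        · simp [hn]
      have hcard : ((ValSet (M : Set (PowerSeries k)))ᶜ).ncard
          = ((ValSet (M' : Set (PowerSeries k)))ᶜ).ncard + 1 := by
        rw [h1, Set.ncard_insert_of_notMem (Set.notMem_compl_iff.mpr hNmem) hfinC']
      obtain ⟨hfin', hrank'⟩ := IH M' hcond'
      set P := Submodule.map M.mkQ M' with hP
      have hPspan : P = Submodule.span k {M.mkQ ((X : PowerSeries k) ^ N)} := by
        rw [hP, hMdef, Submodule.map_sup, Submodule.mkQ_map_self, Submodule.map_span,
          Set.image_singleton, bot_sup_eq]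
      have hPne : M.mkQ ((X : PowerSeries k) ^ N) ≠ 0 := by
        simpa [Submodule.mkQ_apply, Submodule.Quotient.mk_eq_zero] using hXN
      haveI hfinP : Module.Finite k P := by
        rw [hPspan]
        exact Module.Finite.iff_fg.2 (Submodule.fg_span_singleton _)
      have hfrP : Module.finrank k P = 1 := by
        rw [hPspan]; exact finrank_span_singleton hPne
      have e := Submodule.quotientQuotientEquivQuotient M M' hle
      haveI hfe2 : Module.Finite k ((PowerSeries k ⧸ M) ⧸ P) :=
        Module.Finite.equiv e.symm
      haveI hfinQ : Module.Finite k (PowerSeries k ⧸ M) := by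
        have hnoeth : IsNoetherian k (PowerSeries k ⧸ M) :=
          (isNoetherian_iff_submodule_quotient P).2
            ⟨IsNoetherian.iff_fg.2 hfinP, IsNoetherian.iff_fg.2 hfe2⟩
        exact IsNoetherian.iff_fg.1 hnoeth
      have hq := Submodule.finrank_quotient_add_finrank P
      have heq : Module.finrank k ((PowerSeries k ⧸ M) ⧸ P)
          = Module.finrank k (PowerSeries k ⧸ M') := LinearEquiv.finrank_eq e
      refine ⟨hfinQ, ?_⟩
      rw [hcard, ← hrank']
      omega

lemma quot_eq_of_le_of_finrank_eq {S M : Submodule k (PowerSeries k)} (hle : S ≤ M)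
    (hfin : Module.Finite k (PowerSeries k ⧸ S))
    (h : Module.finrank k (PowerSeries k ⧸ S) = Module.finrank k (PowerSeries k ⧸ M)) :
    S = M := by
  haveI := hfin
  haveI hns : IsNoetherian k (PowerSeries k ⧸ S) := IsNoetherian.iff_fg.2 hfin
  set P := Submodule.map S.mkQ M with hP
  haveI : Module.Finite k P := IsNoetherian.iff_fg.1 inferInstance
  have e := Submodule.quotientQuotientEquivQuotient S M hle
  have hq := Submodule.finrank_quotient_add_finrank P
  have heq : Module.finrank k ((PowerSeries k ⧸ S) ⧸ P)
      = Module.finrank k (PowerSeries k ⧸ M) := LinearEquiv.finrank_eq e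
  have h0 : Module.finrank k P = 0 := by omega
  have hPbot : P = ⊥ := Submodule.finrank_eq_zero.1 h0
  have hMS : M ≤ Submodule.comap S.mkQ ⊥ := Submodule.map_le_iff_le_comap.1 (le_of_eq hPbot)
  rw [Submodule.comap_bot, Submodule.ker_mkQ] at hMS
  exact le_antisymm hle hMS

lemma approx {M : Submodule k (PowerSeries k)} {N c' : ℕ}
    (hN : ∀ f : PowerSeries k, X ^ N * f ∈ M)
    (h : ∀ n, c' ≤ n → n ∈ ValSet (M : Set (PowerSeries k))) :
    ∀ f : PowerSeries k, X ^ c' * f ∈ M := by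
  have aux : ∀ (t : ℕ) (g : PowerSeries k),
      (∀ i < max c' (N - t), PowerSeries.coeff i g = 0) → g ∈ M := by
    intro t
    induction t with
    | zero =>
      intro g hg
      exact mem_of_cond hN fun i hi => hg i (by omega)
    | succ t IH =>
      intro g hg
      by_cases hcase : max c' (N - t) ≤ max c' (N - (t + 1))
      · exact IH g fun i hi => hg i (lt_of_lt_of_le hi hcase)
      · have hfacts : c' ≤ max c' (N - (t + 1))
            ∧ max c' (N - t) = max c' (N - (t + 1)) + 1 := by omega
        obtain ⟨f, hfM, hford⟩ := h (max c' (N - (t + 1))) hfacts.1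
        set d := max c' (N - (t + 1)) with hdd
        set a := PowerSeries.coeff d g * (PowerSeries.coeff d f)⁻¹ with ha
        have hg' : ∀ i < max c' (N - t), PowerSeries.coeff i (g - a • f) = 0 := by
          intro i hi
          rw [hfacts.2] at hi
          rcases Nat.lt_succ_iff_lt_or_eq.1 hi with hi' | rfl
          · simp [PowerSeries.coeff_smul, hg i hi', hford.2 i hi']
          · simp only [map_sub, PowerSeries.coeff_smul, smul_eq_mul, ha]
            rw [mul_assoc, inv_mul_cancel₀ hford.1, mul_one, sub_self]
        have h1 := IH (g - a • f) hg'
        have h2 := M.add_mem h1 (M.smul_mem a hfM)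
        simpa using h2
  intro f
  apply aux N
  intro i hi
  have : i < c' := by omega
  exact PowerSeries.X_pow_dvd_iff.1 (dvd_mul_right _ _) i this

end InvTFAE

open InvTFAE

/-- Let `R ⊆ O = k[[z]]` be a `k`-subalgebra containing `z^m·O`, with value
semigroup `Γ`, genus `δ` and conductor `c`, and assume `Γ` is symmetric (`c = 2δ`).
For a standard `R`-submodule `M ⊆ O` the following are equivalent:
(1) `M = R·x` for a single element `x`;
(2) `Δ_M = Γ`;
(3) `dev(M) = 0`, i.e. `dim_k(O/M) = δ`;
(4) `c_M = c`. -/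
theorem invertible_tfae
    {k : Type*} [Field k]
    (R : Subalgebra k (PowerSeries k)) (m : ℕ) (hm : 1 ≤ m)
    (hRm : ∀ f : PowerSeries k, PowerSeries.X ^ m * f ∈ R)
    (hsym : sInf {c : ℕ | ∀ n, c ≤ n → n ∈ ValSet (R : Set (PowerSeries k))}
      = 2 * ((ValSet (R : Set (PowerSeries k)))ᶜ).ncard)
    (M : Submodule k (PowerSeries k))
    (hMR : ∀ r ∈ R, ∀ f ∈ M, r * f ∈ M)
    (hstd : ValSet (R : Set (PowerSeries k)) ⊆ ValSet (M : Set (PowerSeries k))) :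
    List.TFAE
      [∃ x : PowerSeries k,
          (M : Set (PowerSeries k)) = {y | ∃ r ∈ R, y = r * x},
        ValSet (M : Set (PowerSeries k)) = ValSet (R : Set (PowerSeries k)),
        Module.finrank k (PowerSeries k ⧸ M)
          = ((ValSet (R : Set (PowerSeries k)))ᶜ).ncard,
        sInf {c : ℕ | ∀ f : PowerSeries k, PowerSeries.X ^ c * f ∈ M}
          = sInf {c : ℕ | ∀ n, c ≤ n → n ∈ ValSet (R : Set (PowerSeries k))}] := by
  classical
  set Γ := ValSet (R : Set (PowerSeries k)) with hΓdef
  set Δ := ValSet (M : Set (PowerSeries k)) with hΔdef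
  have h0Γ : 0 ∈ Γ := ⟨1, R.one_mem, hasOrd_one⟩
  have hΓadd : ∀ a b : ℕ, a ∈ Γ → b ∈ Γ → a + b ∈ Γ := by
    rintro a b ⟨r, hr, hra⟩ ⟨s, hs, hsb⟩
    exact ⟨r * s, R.mul_mem hr hs, hra.mul hsb⟩
  have hΓm : ∀ n, m ≤ n → n ∈ Γ := by
    intro n hn
    have h := valSet_of_cond (M := Subalgebra.toSubmodule R) (N := m) (fun f => hRm f) hn
    rwa [Subalgebra.coe_toSubmodule] at h
  have hfinΓ : (Γᶜ).Finite := (Set.finite_Iio m).subset (by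
    intro n hn
    by_contra h
    simp only [Set.mem_Iio, not_lt] at h
    exact hn (hΓm n h))
  have hcne : {c : ℕ | ∀ n, c ≤ n → n ∈ Γ}.Nonempty := ⟨m, hΓm⟩
  set c := sInf {c : ℕ | ∀ n, c ≤ n → n ∈ Γ} with hcdef
  have hcΓ : ∀ n, c ≤ n → n ∈ Γ := Nat.sInf_mem hcne
  obtain ⟨x0, hx0M, hx0⟩ : ∃ x, x ∈ M ∧ HasOrd x 0 := by
    obtain ⟨x, hx, ho⟩ := hstd h0Γ
    exact ⟨x, hx, ho⟩
  obtain ⟨v, hv⟩ : ∃ v, x0 * v = 1 := by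
    have hu : IsUnit x0 := PowerSeries.isUnit_iff_constantCoeff.2
      (isUnit_iff_ne_zero.2 (by
        have h := hx0.1
        rwa [PowerSeries.coeff_zero_eq_constantCoeff_apply] at h))
    exact isUnit_iff_exists_inv.1 hu
  have hv' : v * x0 = 1 := by rwa [mul_comm] at hv
  have hcondM : ∀ f : PowerSeries k, X ^ m * f ∈ M := by
    intro f
    have h1 := hMR _ (hRm (f * v)) x0 hx0M
    have h2 : X ^ m * (f * v) * x0 = X ^ m * f := by
      calc X ^ m * (f * v) * x0 = X ^ m * f * (v * x0) := by ring
        _ = X ^ m * f := by rw [hv', mul_one]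
    rwa [h2] at h1
  obtain ⟨hfinM, hrkM⟩ := dim_lemma m M hcondM
  rw [← hΔdef] at hrkM
  have hMcondNe : {c : ℕ | ∀ f : PowerSeries k, X ^ c * f ∈ M}.Nonempty := ⟨m, hcondM⟩
  tfae_have 1 → 2 := by
    rintro ⟨x, hx⟩
    obtain ⟨f0, hf0M, hf00⟩ : ∃ f, f ∈ (M : Set (PowerSeries k)) ∧ HasOrd f 0 := hstd h0Γ
    rw [hx] at hf0M
    obtain ⟨r0, hr0R, hf0e⟩ := hf0M
    have hf0ne : f0 ≠ 0 := hf00.ne_zero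
    have hxne : x ≠ 0 := by rintro rfl; rw [mul_zero] at hf0e; exact hf0ne hf0e
    have hr0ne : r0 ≠ 0 := by
      rintro rfl; rw [zero_mul] at hf0e; exact hf0ne hf0e
    obtain ⟨e, hex⟩ := exists_hasOrd hxne
    obtain ⟨d, hrd⟩ := exists_hasOrd hr0ne
    have hde : d + e = 0 := by
      have h1 : HasOrd f0 (d + e) := by rw [hf0e]; exact hrd.mul hex
      exact h1.unique hf00
    have hex0 : HasOrd x 0 := by
      have he : e = 0 := by omega
      rwa [he] at hex
    apply Set.Subset.antisymm _ hstd
    rintro n ⟨f, hfM, hford⟩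
    rw [hx] at hfM
    obtain ⟨r, hrR, rfl⟩ := hfM
    have hrne : r ≠ 0 := by
      rintro rfl; rw [zero_mul] at hford; exact hford.ne_zero rfl
    obtain ⟨dr, hordr⟩ := exists_hasOrd hrne
    have h1 : HasOrd (r * x) (dr + 0) := hordr.mul hex0
    have hn : n = dr := hford.unique (by simpa using h1)
    exact hn ▸ ⟨r, hrR, hordr⟩
  tfae_have 2 → 1 := by
    intro h2
    refine ⟨x0, ?_⟩
    set S : Submodule k (PowerSeries k) :=
      Submodule.map (LinearMap.mulRight k x0) (Subalgebra.toSubmodule R) with hSdef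
    have hSset : (S : Set (PowerSeries k)) = {y | ∃ r ∈ R, y = r * x0} := by
      ext y
      simp only [hSdef, Submodule.map_coe, Set.mem_image, SetLike.mem_coe,
        Subalgebra.mem_toSubmodule, LinearMap.mulRight_apply, Set.mem_setOf_eq]
      constructor
      · rintro ⟨r, hr, rfl⟩; exact ⟨r, hr, rfl⟩
      · rintro ⟨r, hr, rfl⟩; exact ⟨r, hr, rfl⟩
    have hSM : S ≤ M := by
      rintro y ⟨r, hr, rfl⟩
      exact hMR r hr x0 hx0M
    have hcondS : ∀ f : PowerSeries k, X ^ m * f ∈ S := by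
      intro f
      refine ⟨X ^ m * (f * v), hRm (f * v), ?_⟩
      show X ^ m * (f * v) * x0 = X ^ m * f
      calc X ^ m * (f * v) * x0 = X ^ m * f * (v * x0) := by ring
        _ = X ^ m * f := by rw [hv', mul_one]
    have hVSS : ValSet (S : Set (PowerSeries k)) = Γ := by
      apply Set.Subset.antisymm
      · rintro n ⟨f, hfS, hford⟩
        obtain ⟨r, hrR, rfl⟩ := hfS
        rw [LinearMap.mulRight_apply] at hford
        have hrne : r ≠ 0 := by
          rintro rfl
          rw [zero_mul] at hford
          exact hford.ne_zero rfl
        obtain ⟨dr, hordr⟩ := exists_hasOrd hrne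
        have h1 : HasOrd (r * x0) (dr + 0) := hordr.mul hx0
        have hn : n = dr := hford.unique (by simpa using h1)
        exact hn ▸ ⟨r, hrR, hordr⟩
      · rintro n ⟨r, hrR, hordr⟩
        exact ⟨r * x0, ⟨r, hrR, rfl⟩, by simpa using hordr.mul hx0⟩
    obtain ⟨hfinS, hrkS⟩ := dim_lemma m S hcondS
    have hSeqM : S = M := by
      apply quot_eq_of_le_of_finrank_eq hSM hfinS
      rw [hrkS, hVSS, hrkM, h2]
    rw [← hSeqM, hSset]
  tfae_have 2 → 3 := by
    intro h2
    rw [hrkM, h2]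
  tfae_have 3 → 2 := by
    intro h3
    have hsub : Δᶜ ⊆ Γᶜ := Set.compl_subset_compl.2 hstd
    have hcard : Δᶜ.ncard = Γᶜ.ncard := by rw [← hrkM, h3]
    have heq : Δᶜ = Γᶜ := Set.eq_of_subset_of_ncard_le hsub hcard.ge hfinΓ
    exact compl_inj_iff.1 heq
  tfae_have 2 → 4 := by
    intro h2
    apply le_antisymm
    · refine Nat.sInf_le (approx hcondM (fun n hn => ?_))
      have hng := hcΓ n hn
      rwa [← h2] at hng
    · have hmem := Nat.sInf_mem hMcondNe
      conv_lhs => rw [hcdef]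
      refine Nat.sInf_le ?_
      intro n hn
      rw [← h2]
      exact valSet_of_cond hmem hn
  tfae_have 4 → 2 := by
    intro h4
    apply Set.Subset.antisymm _ hstd
    intro d hd
    by_contra hdΓ
    have hdc : d < c := by
      by_contra hge
      exact hdΓ (hcΓ d (not_lt.1 hge))
    have hcpos : 1 ≤ c := by omega
    have hc1 : c - 1 ∉ Γ := by
      intro hmem
      have hmem2 : c - 1 ∈ {c : ℕ | ∀ n, c ≤ n → n ∈ Γ} := by
        intro n hn
        rcases eq_or_lt_of_le hn with h | h
        · exact h ▸ hmem
        · exact hcΓ n (by omega)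
      have hle := Nat.sInf_le hmem2
      rw [← hcdef] at hle
      omega
    set A := (Finset.range c).filter (· ∈ Γ) with hA
    set B := (Finset.range c).filter (· ∉ Γ) with hB
    have hABcard : A.card + B.card = c := by
      rw [hA, hB, Finset.card_filter_add_card_filter_not, Finset.card_range]
    have hBΓ : (Γᶜ : Set ℕ) = ↑B := by
      ext n
      simp only [Set.mem_compl_iff, hB, Finset.coe_filter, Finset.mem_range,
        Set.mem_setOf_eq]
      constructor
      · intro hn
        refine ⟨?_, hn⟩
        by_contra hge
        exact hn (hcΓ n (not_lt.1 hge))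
      · tauto
    have hBcard : B.card = (Γᶜ).ncard := by rw [hBΓ, Set.ncard_coe_finset]
    have hAcard : A.card = (Γᶜ).ncard := by omega
    have hmap : ∀ n ∈ A, c - 1 - n ∈ B := by
      intro n hn
      rw [hA, Finset.mem_filter, Finset.mem_range] at hn
      rw [hB, Finset.mem_filter, Finset.mem_range]
      refine ⟨by omega, ?_⟩
      intro hmem
      apply hc1
      have h2 := hΓadd _ _ hmem hn.2
      rwa [show c - 1 - n + n = c - 1 by omega] at h2
    have hinj : ∀ a₁ a₂, a₁ ∈ A → a₂ ∈ A →
        c - 1 - a₁ = c - 1 - a₂ → a₁ = a₂ := by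
      intro a₁ a₂ h₁ h₂ hE
      rw [hA, Finset.mem_filter, Finset.mem_range] at h₁ h₂
      omega
    have hsurj := Finset.surj_on_of_inj_on_of_card_le (fun n _ => c - 1 - n)
      hmap hinj (by omega)
    have hdB : d ∈ B := by
      rw [hB, Finset.mem_filter, Finset.mem_range]; exact ⟨hdc, hdΓ⟩
    obtain ⟨n, hnA, hdn⟩ := hsurj d hdB
    have hn' := hnA
    rw [hA, Finset.mem_filter, Finset.mem_range] at hn'
    have hdn' : d = c - 1 - n := hdn
    have hnd : n + d = c - 1 := by omega
    obtain ⟨r, hrR, hOr⟩ := hn'.2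
    obtain ⟨f, hfM, hOf⟩ := hd
    have hc1Δ : c - 1 ∈ Δ := ⟨r * f, hMR r hrR f hfM, by
      have hmul := hOr.mul hOf
      rwa [hnd] at hmul⟩
    have hcMcond : ∀ g : PowerSeries k, X ^ c * g ∈ M := by
      have h := Nat.sInf_mem hMcondNe
      rwa [h4] at h
    have hcond1 : ∀ g : PowerSeries k, X ^ (c - 1) * g ∈ M := by
      apply approx hcondM
      intro j hj
      rcases eq_or_lt_of_le hj with h | h
      · exact h ▸ hc1Δ
      · exact valSet_of_cond hcMcond (by omega)
    have hle := Nat.sInf_le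
      (s := {c : ℕ | ∀ f : PowerSeries k, X ^ c * f ∈ M}) hcond1
    rw [h4] at hle
    omega
  tfae_finish
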